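/- Let k = 2s and 2 ≤ t ≤ s. If there exists a nonsingular k×k matrix E = (E_1, E_2) over F_q, where E_1 and E_2 are k×s, such that E_1, E_2, E_1+E_2, and E_1−E_2 all have the property that any t of their rows are linearly independent, then there exists a strong double large set of orthogonal arrays SDLOA(q^s; t, k, q). -/
import Mathlib


open Finset

/-- An orthogonal array of strength `t` with `k` rows (constraints), columns indexed
by `ι`, symbols in `α`, and index `lam`: in every choice of `t` distinct rows,
every `t`-tuple of symbols appears in exactly `lam` columns. -/
def IsOAOn {α ι : Type*} [Fintype α] [DecidableEq α] [Fintype ι] {k : ℕ} (t : ℕ)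
    (A : Fin k → ι → α) (lam : ℕ) : Prop :=
  ∀ rows : Fin t → Fin k, Function.Injective rows → ∀ x : Fin t → α,
    (Finset.univ.filter fun c : ι => ∀ i, A (rows i) c = x i).card = lam

/-- An array is simple if no two of its columns are identical. -/
def IsSimpleArr {α ι : Type*} {k : ℕ} (A : Fin k → ι → α) : Prop :=
  Function.Injective fun c : ι => fun i => A i c

/-- A large set of orthogonal arrays: a family (indexed by `σ`) of simple OAs of
strength `t` and index `lam` such that every `k`-tuple of symbols occurs as a
column of exactly one array of the family. -/
def IsLOAOn {α ι σ : Type*} [Fintype α] [DecidableEq α] [Fintype ι] {k : ℕ} (t : ℕ)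
    (A : σ → Fin k → ι → α) (lam : ℕ) : Prop :=
  (∀ s, IsOAOn t (A s) lam ∧ IsSimpleArr (A s)) ∧
  ∀ x : Fin k → α, ∃! p : σ × ι, (fun i => A p.1 i p.2) = x

/-- A strong double large set of orthogonal arrays `SDLOA(N; t, k, v)`:
the family `A_0, …, A_{N-1}` is an LOA, the derived arrays `B_j`
(whose `s`-th column is the `j`-th column of `A_s`) form an LOA, and the arrays
`D` (`j`-th column = `j`-th column of `A_j`) and `D'` (`j`-th column =
`(N-1-j)`-th column of `A_j`) are both OAs. -/
def IsSDLOA {α : Type*} [Fintype α] [DecidableEq α] {k N : ℕ} (t : ℕ)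
    (A : Fin N → Fin k → Fin N → α) (lam : ℕ) : Prop :=
  IsLOAOn t A lam ∧
  IsLOAOn t (fun (j : Fin N) (i : Fin k) (s : Fin N) => A s i j) lam ∧
  IsOAOn t (fun (i : Fin k) (j : Fin N) => A j i j) lam ∧
  IsOAOn t (fun (i : Fin k) (j : Fin N) => A j i (Fin.rev j)) lam

/-- A `t`-multimagic square of order `n`: an `n × n` matrix whose entries are the
consecutive integers `0, …, n^2 - 1` and such that, for every `1 ≤ e ≤ t`,
the entrywise `e`-th power has equal row sums, column sums, and sums on both
diagonals. -/
def IsMultimagic (n t : ℕ) (M : Fin n → Fin n → ℕ) : Prop :=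
  (∀ i j, M i j < n ^ 2) ∧
  (Function.Injective fun p : Fin n × Fin n => M p.1 p.2) ∧
  ∀ e, 1 ≤ e → e ≤ t → ∃ S,
    (∀ i, ∑ j, (M i j) ^ e = S) ∧ (∀ j, ∑ i, (M i j) ^ e = S) ∧
    (∑ i, (M i i) ^ e = S) ∧ (∑ i, (M i (Fin.rev i)) ^ e = S)

/-- A set of `m` complementary `t`-multimagic squares of order `n`, `m`-CMS(`n`,`t`):
`m` multimagic squares such that summing the `(t+1)`-st powers of the entries over
all `m` squares along any fixed row, any fixed column, or either diagonal always
gives `m · S_{t+1}(n)` (the conditions are stated multiplied through by `n`). -/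
def IsCMS (m n t : ℕ) (B : Fin m → Fin n → Fin n → ℕ) : Prop :=
  (∀ s, IsMultimagic n t (B s)) ∧
  (∀ i, n * ∑ s, ∑ j, (B s i j) ^ (t + 1) = m * ∑ k ∈ Finset.range (n ^ 2), k ^ (t + 1)) ∧
  (∀ j, n * ∑ s, ∑ i, (B s i j) ^ (t + 1) = m * ∑ k ∈ Finset.range (n ^ 2), k ^ (t + 1)) ∧
  (n * ∑ s, ∑ i, (B s i i) ^ (t + 1) = m * ∑ k ∈ Finset.range (n ^ 2), k ^ (t + 1)) ∧
  (n * ∑ s, ∑ i, (B s i (Fin.rev i)) ^ (t + 1) = m * ∑ k ∈ Finset.range (n ^ 2), k ^ (t + 1))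

/-- Any `t` rows of the matrix `M` are linearly independent. -/
def RowsIndep {F : Type*} [Field F] {m' : Type*} {s : ℕ} (t : ℕ)
    (M : Matrix m' (Fin s) F) : Prop :=
  ∀ rows : Fin t → m', Function.Injective rows → LinearIndependent F fun i => M (rows i)

/-- The block matrix `(A, B)` (with `A, B` of the same shape) is nonsingular, phrased
via bijectivity of the associated linear map. -/
def NonsingularPair {F : Type*} [Field F] {m' : Type*} {s : ℕ}
    (A B : Matrix m' (Fin s) F) : Prop :=
  Function.Bijective fun p : (Fin s → F) × (Fin s → F) => A.mulVec p.1 + B.mulVec p.2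

section Aux

open Matrix

/-- An involution's cycle type consists only of 2s. -/
lemma invol_cycleType {α : Type*} [Fintype α] [DecidableEq α] (f : Equiv.Perm α)
    (hf : f * f = 1) : f.cycleType = Multiset.replicate (Multiset.card f.cycleType) 2 := by
  rw [Multiset.eq_replicate_card]
  intro b hb
  have h2 : 2 ≤ b := Equiv.Perm.two_le_of_mem_cycleType hb
  have hdvd : b ∣ orderOf f := by
    rw [← Equiv.Perm.lcm_cycleType]
    exact Multiset.dvd_lcm hb
  have ho : orderOf f ∣ 2 := orderOf_dvd_of_pow_eq_one (by rw [pow_two]; exact hf)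
  exact le_antisymm (Nat.le_of_dvd (by norm_num) (hdvd.trans ho)) h2

/-- Two involutions on a finite type with the same number of fixed points are conjugate. -/
lemma invol_conj {α : Type*} [Fintype α] [DecidableEq α] (f g : Equiv.Perm α)
    (hf : f * f = 1) (hg : g * g = 1)
    (hcard : (Finset.univ.filter fun a => f a = a).card =
      (Finset.univ.filter fun a => g a = a).card) :
    ∃ π : Equiv.Perm α, ∀ a, π (f a) = g (π a) := by
  have hsupp : f.support.card = g.support.card := by
    have h1 := Finset.card_filter_add_card_filter_not
      (s := (Finset.univ : Finset α)) (p := fun a => f a = a)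
    have h2 := Finset.card_filter_add_card_filter_not
      (s := (Finset.univ : Finset α)) (p := fun a => g a = a)
    have ef : f.support = Finset.univ.filter fun a => ¬ f a = a := by
      ext a; simp [Equiv.Perm.mem_support]
    have eg : g.support = Finset.univ.filter fun a => ¬ g a = a := by
      ext a; simp [Equiv.Perm.mem_support]
    rw [ef, eg]; omega
  have hct : f.cycleType = g.cycleType := by
    have h1 := invol_cycleType f hf
    have h2 := invol_cycleType g hg
    have hs1 : Multiset.card f.cycleType * 2 = f.support.card := by
      conv_rhs => rw [← Equiv.Perm.sum_cycleType]
      conv_rhs => rw [h1]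
      simp [Multiset.sum_replicate, mul_comm]
    have hs2 : Multiset.card g.cycleType * 2 = g.support.card := by
      conv_rhs => rw [← Equiv.Perm.sum_cycleType]
      conv_rhs => rw [h2]
      simp [Multiset.sum_replicate, mul_comm]
    have : Multiset.card f.cycleType = Multiset.card g.cycleType := by omega
    rw [h1, h2, this]
  obtain ⟨c, hc⟩ := isConj_iff.mp (Equiv.Perm.isConj_iff_cycleType_eq.mpr hct)
  refine ⟨c, fun a => ?_⟩
  have : c * f = g * c := by
    rw [← hc]; group
  calc c (f a) = (c * f) a := rfl
  _ = (g * c) a := by rw [this]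
  _ = g (c a) := rfl

/-- Fixed points of `Fin.rev` on `Fin N`. -/
lemma revfix_card (N : ℕ) :
    (Finset.univ.filter fun j : Fin N => Fin.rev j = j).card = N % 2 := by
  rcases Nat.even_or_odd N with hN | hN
  · obtain ⟨m, hm⟩ := hN
    have hfe : (Finset.univ.filter fun j : Fin N => Fin.rev j = j) = ∅ := by
      ext j
      simp only [Finset.mem_filter, Finset.mem_univ, true_and, Finset.notMem_empty, iff_false]
      intro h
      have hv : (Fin.rev j : ℕ) = (j : ℕ) := congrArg Fin.val h
      rw [Fin.val_rev] at hv
      have hlt := j.isLt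
      omega
    rw [hfe, Finset.card_empty]
    omega
  · obtain ⟨m, hm⟩ := hN
    have hmlt : m < N := by omega
    have hfs : (Finset.univ.filter fun j : Fin N => Fin.rev j = j) = {⟨m, hmlt⟩} := by
      ext j
      simp only [Finset.mem_filter, Finset.mem_univ, true_and, Finset.mem_singleton]
      constructor
      · intro h
        have hv : (Fin.rev j : ℕ) = (j : ℕ) := congrArg Fin.val h
        rw [Fin.val_rev] at hv
        have hlt := j.isLt
        have : (j : ℕ) = m := by omega
        exact Fin.ext (show (j : ℕ) = ((⟨m, hmlt⟩ : Fin N) : ℕ) from this)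
      · intro h
        subst h
        apply Fin.ext
        rw [Fin.val_rev]
        show N - (m + 1) = m
        omega
    rw [hfs, Finset.card_singleton]
    omega


/-- The main counting lemma: an affine map given by a matrix whose relevant rows are
independent, composed with a bijection of the column index, gives an OA. -/
lemma count_lemma {F : Type} [Field F] [Fintype F] [DecidableEq F] {s t k N : ℕ}
    (hts : t ≤ s) (ψ : Fin N ≃ (Fin s → F)) (M : Matrix (Fin k) (Fin s) F)
    (b : Fin k → F) (hM : RowsIndep t M) :
    IsOAOn t (fun i j => M.mulVec (ψ j) i + b i)
      (Fintype.card F ^ s / Fintype.card F ^ t) := by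
  classical
  intro rows hrows x
  have hq : 0 < Fintype.card F := Fintype.card_pos
  rw [Nat.pow_div hts hq]
  set M' : Matrix (Fin t) (Fin s) F := M.submatrix rows id with hM'def
  have hli : LinearIndependent F fun i => M' i := hM rows hrows
  set L := M'.mulVecLin with hLdef
  -- surjectivity of L
  have hrank : M'.rank = t := by
    have := hli.rank_matrix (M := M')
    simpa using this
  have hrange : LinearMap.range L = ⊤ := by
    apply Submodule.eq_top_of_finrank_eq
    show Module.finrank F (LinearMap.range L) = _
    have : Module.finrank F (LinearMap.range L) = M'.rank := rfl
    rw [this, hrank, Module.finrank_pi]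
    simp
  have hsurj : Function.Surjective L := LinearMap.range_eq_top.mp hrange
  -- kernel cardinality
  have hker : Nat.card (LinearMap.ker L) = Fintype.card F ^ (s - t) := by
    have hcard := Module.card_eq_pow_finrank (K := F) (V := LinearMap.ker L)
    rw [Nat.card_eq_fintype_card, hcard]
    congr 1
    have hrn := LinearMap.finrank_range_add_finrank_ker L
    rw [hrange] at hrn
    simp only [Module.finrank_pi, Fintype.card_fin, finrank_top] at hrn
    have hfr : Module.finrank F (⊤ : Submodule F (Fin t → F)) = t := by
      rw [finrank_top, Module.finrank_pi, Fintype.card_fin]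
    omega
  -- the fiber over y
  set y : Fin t → F := fun i => x i - b (rows i) with hy
  have h0 : (Finset.univ.filter fun v : Fin s → F => L v = 0).card
      = Fintype.card F ^ (s - t) := by
    rw [← hker, Nat.card_eq_fintype_card, ← Fintype.card_subtype]
    exact Fintype.card_congr
      (Equiv.subtypeEquivRight fun v => (LinearMap.mem_ker (f := L)).symm).symm
  have key : (Finset.univ.filter fun v : Fin s → F => L v = y).card
      = Fintype.card F ^ (s - t) := by
    obtain ⟨v0, hv0⟩ := hsurj y
    rw [← h0]
    apply Finset.card_bij (fun v _ => v - v0)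
    · intro w hw
      simp only [Finset.mem_filter, Finset.mem_univ, true_and] at hw ⊢
      rw [map_sub, hw, hv0, sub_self]
    · intro a ha b' hb' h
      exact sub_left_injective h
    · intro v hv
      simp only [Finset.mem_filter, Finset.mem_univ, true_and] at hv
      refine ⟨v + v0, ?_, by abel⟩
      simp only [Finset.mem_filter, Finset.mem_univ, true_and]
      rw [map_add, hv, hv0, zero_add]
  rw [← key]
  apply Finset.card_bij (fun j _ => ψ j)
  · intro j hj
    simp only [Finset.mem_filter, Finset.mem_univ, true_and] at hj ⊢
    funext i
    have := hj i
    show (M' *ᵥ ψ j) i = y i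
    have hMi : (M' *ᵥ ψ j) i = M.mulVec (ψ j) (rows i) := rfl
    rw [hMi, hy]
    exact eq_sub_iff_add_eq.mpr (hj i)
  · intro a _ b' _ h
    exact ψ.injective h
  · intro v hv
    simp only [Finset.mem_filter, Finset.mem_univ, true_and] at hv
    refine ⟨ψ.symm v, ?_, by simp⟩
    simp only [Finset.mem_filter, Finset.mem_univ, true_and]
    intro i
    have : (M' *ᵥ v) i = y i :=
      congrFun (show M' *ᵥ v = y by rw [← Matrix.mulVecLin_apply]; exact hv) i
    have hMi : (M' *ᵥ v) i = M.mulVec v (rows i) := rfl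
    rw [hMi] at this
    simp only [Equiv.apply_symm_apply]
    rw [this, hy]
    ring

end Aux

/-- Let `k = 2s`, `2 ≤ t ≤ s`. If there is a nonsingular matrix
`E = (E₁, E₂)` over `F_q` with `E₁, E₂, E₁+E₂, E₁-E₂` all having any `t` rows
linearly independent, then there exists an SDLOA(q^s; t, 2s, q). -/
theorem sdloa_of_matrix {F : Type} [Field F] [Fintype F] [DecidableEq F] {s t : ℕ}
    (ht : 2 ≤ t) (hts : t ≤ s)
    (E1 E2 : Matrix (Fin (2 * s)) (Fin s) F)
    (hns : NonsingularPair E1 E2)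
    (h1 : RowsIndep t E1) (h2 : RowsIndep t E2)
    (h3 : RowsIndep t (E1 + E2)) (h4 : RowsIndep t (E1 - E2)) :
    ∃ A : Fin (Fintype.card F ^ s) → Fin (2 * s) → Fin (Fintype.card F ^ s) → F,
      IsSDLOA t A (Fintype.card F ^ s / Fintype.card F ^ t) := by
  classical
  have hs2 : 2 ≤ s := ht.trans hts
  -- injectivity of the component linear maps
  have hE1inj : Function.Injective E1.mulVec := by
    intro a b h
    have h' := hns.injective (a₁ := (a, 0)) (a₂ := (b, 0))
      (by simp only [h])
    exact congrArg Prod.fst h'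
  have hE2inj : Function.Injective E2.mulVec := by
    intro a b h
    have h' := hns.injective (a₁ := (0, a)) (a₂ := (0, b))
      (by simp only [h])
    exact congrArg Prod.snd h'
  -- parity-compatible constant
  obtain ⟨c, hc⟩ : ∃ c : Fin s → F,
      (Finset.univ.filter fun v : Fin s → F => c - v = v).card
        = (Fintype.card F ^ s) % 2 := by
    obtain ⟨n, hp, hcard⟩ := FiniteField.card F (ringChar F)
    by_cases h2 : (2 : F) = 0
    · -- characteristic 2
      have hdvd : ringChar F ∣ 2 := by
        have := (CharP.cast_eq_zero_iff F (ringChar F) 2).mp (by exact_mod_cast h2)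
        exact this
      have hp2 : ringChar F = 2 := (Nat.prime_dvd_prime_iff_eq hp Nat.prime_two).mp hdvd
      refine ⟨fun _ => 1, ?_⟩
      have hfe : (Finset.univ.filter fun v : Fin s → F => (fun _ => (1 : F)) - v = v) = ∅ := by
        ext v
        simp only [Finset.mem_filter, Finset.mem_univ, true_and, Finset.notMem_empty,
          iff_false]
        intro h
        have h0 := congrFun h ⟨0, by omega⟩
        have : (1 : F) - v ⟨0, by omega⟩ = v ⟨0, by omega⟩ := h0
        have h1 : (1 : F) = 2 * v ⟨0, by omega⟩ := by ring_nf; linear_combination this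
        rw [h2, zero_mul] at h1
        exact one_ne_zero h1
      rw [hfe, Finset.card_empty]
      have hqe : 2 ∣ Fintype.card F := by
        rw [hcard, hp2]
        exact dvd_pow_self 2 (by positivity)
      have hNe : 2 ∣ Fintype.card F ^ s :=
        dvd_trans hqe (dvd_pow_self _ (by omega : s ≠ 0))
      omega
    · -- odd characteristic
      refine ⟨0, ?_⟩
      have hfe : (Finset.univ.filter fun v : Fin s → F => (0 : Fin s → F) - v = v) = {0} := by
        ext v
        simp only [Finset.mem_filter, Finset.mem_univ, true_and, Finset.mem_singleton]
        constructor
        · intro h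
          funext i
          have hi := congrFun h i
          have : (0 : F) - v i = v i := hi
          have h1 : (2 : F) * v i = 0 := by linear_combination -this
          rcases mul_eq_zero.mp h1 with h' | h'
          · exact absurd h' h2
          · exact h'
        · intro h
          subst h
          funext i
          simp
      rw [hfe, Finset.card_singleton]
      have hpodd : Odd (ringChar F) := by
        refine hp.odd_of_ne_two fun hp2 => h2 ?_
        have := (CharP.cast_eq_zero_iff F (ringChar F) 2).mpr (by rw [hp2])
        exact_mod_cast this
      have hqodd : Odd (Fintype.card F) := by
        rw [hcard]; exact hpodd.pow
      have hodd : Odd (Fintype.card F ^ s) := hqodd.pow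
      rw [Nat.odd_iff] at hodd
      omega
  -- build the rev-compatible bijection φ
  have hcards : Fintype.card (Fin (Fintype.card F ^ s)) = Fintype.card (Fin s → F) := by
    rw [Fintype.card_fin, Fintype.card_fun, Fintype.card_fin]
  let e0 : Fin (Fintype.card F ^ s) ≃ (Fin s → F) := Fintype.equivOfCardEq hcards
  let np : Equiv.Perm (Fin s → F) :=
    ⟨fun v => c - v, fun v => c - v, fun v => by simp, fun v => by simp⟩
  let g : Equiv.Perm (Fin (Fintype.card F ^ s)) := (e0.trans np).trans e0.symm
  have hgapp : ∀ a, g a = e0.symm (c - e0 a) := fun a => rfl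
  have hginv : g * g = 1 := by
    apply Equiv.ext
    intro a
    rw [Equiv.Perm.mul_apply, Equiv.Perm.one_apply, hgapp, hgapp, Equiv.apply_symm_apply,
      sub_sub_cancel, Equiv.symm_apply_apply]
  have hfinv : (Fin.revPerm : Equiv.Perm (Fin (Fintype.card F ^ s))) * Fin.revPerm = 1 := by
    apply Equiv.ext
    intro a
    rw [Equiv.Perm.mul_apply, Equiv.Perm.one_apply, Fin.revPerm_apply, Fin.revPerm_apply,
      Fin.rev_rev]
  have hfixg : (Finset.univ.filter fun a : Fin (Fintype.card F ^ s) => g a = a).card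
      = (Finset.univ.filter fun v : Fin s → F => c - v = v).card := by
    apply Finset.card_bij (fun a _ => e0 a)
    · intro a ha
      simp only [Finset.mem_filter, Finset.mem_univ, true_and] at ha ⊢
      rw [hgapp, Equiv.symm_apply_eq] at ha
      exact ha
    · intro a _ b _ h
      exact e0.injective h
    · intro v hv
      simp only [Finset.mem_filter, Finset.mem_univ, true_and] at hv
      refine ⟨e0.symm v, ?_, by simp⟩
      simp only [Finset.mem_filter, Finset.mem_univ, true_and]
      rw [hgapp, Equiv.apply_symm_apply, hv]
  obtain ⟨π, hπ⟩ := invol_conj Fin.revPerm g hfinv hginv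
    (by simp only [Fin.revPerm_apply]; rw [revfix_card, hfixg, hc])
  let φ : Fin (Fintype.card F ^ s) ≃ (Fin s → F) := (π : Equiv.Perm _).trans e0
  have hφrev : ∀ j, φ (Fin.rev j) = c - φ j := by
    intro j
    have h := hπ j
    show e0 (π (Fin.rev j)) = c - e0 (π j)
    have hrev : Fin.rev j = Fin.revPerm j := rfl
    rw [hrev, h, hgapp, Equiv.apply_symm_apply]
  -- the arrays
  refine ⟨fun p i j => E1.mulVec (φ p) i + E2.mulVec (φ j) i, ?_, ?_, ?_, ?_⟩
  · -- first LOA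
    constructor
    · intro p
      constructor
      · show IsOAOn t (fun (i : Fin (2 * s)) (j : Fin (Fintype.card F ^ s)) =>
          E1.mulVec (φ p) i + E2.mulVec (φ j) i) _
        have hfe : (fun (i : Fin (2 * s)) (j : Fin (Fintype.card F ^ s)) =>
            E1.mulVec (φ p) i + E2.mulVec (φ j) i)
            = fun i j => E2.mulVec (φ j) i + (E1.mulVec (φ p)) i := by
          funext i j; exact add_comm _ _
        rw [hfe]
        exact count_lemma hts φ E2 (E1.mulVec (φ p)) h2
      · intro j1 j2 h
        have h2' : E2.mulVec (φ j1) = E2.mulVec (φ j2) := by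
          funext i
          have := congrFun h i
          exact add_left_cancel this
        exact φ.injective (hE2inj h2')
    · intro x
      obtain ⟨⟨a, b⟩, hab⟩ := hns.surjective x
      refine ⟨(φ.symm a, φ.symm b), ?_, ?_⟩
      · funext i
        simp only [Equiv.apply_symm_apply]
        exact congrFun hab i
      · rintro ⟨p1, p2⟩ hp
        have hkey : (fun p : (Fin s → F) × (Fin s → F) => E1.mulVec p.1 + E2.mulVec p.2)
            (φ p1, φ p2) = x := by
          funext i
          exact congrFun hp i
        have hinj := hns.injective (hkey.trans hab.symm)
        have e1 : φ p1 = a := congrArg Prod.fst hinj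
        have e2 : φ p2 = b := congrArg Prod.snd hinj
        simp only [Prod.mk.injEq]
        exact ⟨by rw [← e1, Equiv.symm_apply_apply], by rw [← e2, Equiv.symm_apply_apply]⟩
  · -- second LOA (transposed family)
    constructor
    · intro j
      constructor
      · exact count_lemma hts φ E1 (E2.mulVec (φ j)) h1
      · intro p1 p2 h
        have h1' : E1.mulVec (φ p1) = E1.mulVec (φ p2) := by
          funext i
          have := congrFun h i
          exact add_right_cancel this
        exact φ.injective (hE1inj h1')
    · intro x
      obtain ⟨⟨a, b⟩, hab⟩ := hns.surjective x
      refine ⟨(φ.symm b, φ.symm a), ?_, ?_⟩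
      · funext i
        simp only [Equiv.apply_symm_apply]
        exact congrFun hab i
      · rintro ⟨p1, p2⟩ hp
        have hkey : (fun p : (Fin s → F) × (Fin s → F) => E1.mulVec p.1 + E2.mulVec p.2)
            (φ p2, φ p1) = x := by
          funext i
          exact congrFun hp i
        have hinj := hns.injective (hkey.trans hab.symm)
        have e1 : φ p2 = a := congrArg Prod.fst hinj
        have e2 : φ p1 = b := congrArg Prod.snd hinj
        simp only [Prod.mk.injEq]
        exact ⟨by rw [← e2, Equiv.symm_apply_apply], by rw [← e1, Equiv.symm_apply_apply]⟩
  · -- diagonal D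
    have hfe : (fun (i : Fin (2 * s)) (j : Fin (Fintype.card F ^ s)) =>
        E1.mulVec (φ j) i + E2.mulVec (φ j) i)
        = fun i j => (E1 + E2).mulVec (φ j) i + (0 : Fin (2 * s) → F) i := by
      funext i j
      simp [Matrix.add_mulVec]
    show IsOAOn t (fun (i : Fin (2 * s)) (j : Fin (Fintype.card F ^ s)) =>
      E1.mulVec (φ j) i + E2.mulVec (φ j) i) _
    rw [hfe]
    exact count_lemma hts φ (E1 + E2) 0 h3
  · -- antidiagonal D'
    have hfe : (fun (i : Fin (2 * s)) (j : Fin (Fintype.card F ^ s)) =>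
        E1.mulVec (φ j) i + E2.mulVec (φ (Fin.rev j)) i)
        = fun i j => (E1 - E2).mulVec (φ j) i + (E2.mulVec c) i := by
      funext i j
      rw [hφrev, Matrix.mulVec_sub, Matrix.sub_mulVec]
      simp only [Pi.sub_apply]
      ring
    show IsOAOn t (fun (i : Fin (2 * s)) (j : Fin (Fintype.card F ^ s)) =>
      E1.mulVec (φ j) i + E2.mulVec (φ (Fin.rev j)) i) _
    rw [hfe]
    exact count_lemma hts φ (E1 - E2) (E2.mulVec c) h4
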